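/- Let G=(V,E) be a finite simple graph with unanimity thresholds and let S ⊆ V with |S| ≤ k for a positive integer k. If the subgraph of G induced by σ[S] is connected, then any two vertices of σ[S] are at distance at most 2k in the induced subgraph G[σ[S]] (so G[σ[S]] has diameter at most 2k). -/

import Mathlib

open scoped Classical

variable {V : Type*} [Fintype V]

/-- The open neighborhood of `v` as a `Finset`. -/
noncomputable def nbr (G : SimpleGraph V) (v : V) : Finset V :=
  Finset.univ.filter fun w => G.Adj v w

/-- The degree of a vertex. -/
noncomputable def deg (G : SimpleGraph V) (v : V) : ℕ := (nbr G v).card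

/-- One round of the activation process: active vertices stay active and every vertex
having at least `thr v` active neighbors becomes active. -/
noncomputable def actStep (G : SimpleGraph V) (thr : V → ℕ) (A : Finset V) : Finset V :=
  A ∪ Finset.univ.filter fun v => thr v ≤ (nbr G v ∩ A).card

/-- `sigmaCl G thr S` = σ[S], the set of vertices active at the end of the activation
process started with seed set `S` (iterating `|V|` rounds suffices to stabilize). -/
noncomputable def sigmaCl (G : SimpleGraph V) (thr : V → ℕ) (S : Finset V) : Finset V :=
  (actStep G thr)^[Fintype.card V] S

/-- `sigmaOp G thr S` = σ(S) = σ[S] \ S, the open activated set. -/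
noncomputable def sigmaOp (G : SimpleGraph V) (thr : V → ℕ) (S : Finset V) : Finset V :=
  sigmaCl G thr S \ S

lemma subset_actStep (G : SimpleGraph V) (thr : V → ℕ) (A : Finset V) :
    A ⊆ actStep G thr A := Finset.subset_union_left

lemma iterate_mono (G : SimpleGraph V) (thr : V → ℕ) (S : Finset V) {n m : ℕ} (h : n ≤ m) :
    (actStep G thr)^[n] S ⊆ (actStep G thr)^[m] S := by
  induction m with
  | zero => simpa [Nat.le_zero.mp h]
  | succ m ih =>
    rcases Nat.lt_or_ge n (m+1) with h' | h'
    · have := ih (Nat.lt_succ_iff.mp h')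
      rw [Function.iterate_succ_apply']
      exact this.trans (subset_actStep _ _ _)
    · have : n = m + 1 := le_antisymm h h'
      simp [this]

/-- For an activated vertex not in the seed set, there is a round with all its
neighbors active while the vertex itself is not yet active. -/
lemma exists_round (G : SimpleGraph V) (S : Finset V) {u : V}
    (hu : u ∈ sigmaCl G (deg G) S) (huS : u ∉ S) :
    ∃ n : ℕ, nbr G u ⊆ (actStep G (deg G))^[n] S ∧ u ∉ (actStep G (deg G))^[n] S := by
  have hP : ∃ n, u ∈ (actStep G (deg G))^[n] S := ⟨Fintype.card V, hu⟩
  classical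
  let N := Nat.find hP
  have hN : u ∈ (actStep G (deg G))^[N] S := Nat.find_spec hP
  have hN0 : N ≠ 0 := by
    intro h
    rw [h] at hN
    exact huS hN
  obtain ⟨m, hm⟩ := Nat.exists_eq_succ_of_ne_zero hN0
  refine ⟨m, ?_, ?_⟩
  · have hNm : u ∈ actStep G (deg G) ((actStep G (deg G))^[m] S) := by
      have h' : u ∈ (actStep G (deg G))^[m + 1] S := by rw [← Nat.succ_eq_add_one, ← hm]; exact hN
      rwa [Function.iterate_succ_apply'] at h'
    have hnot : u ∉ (actStep G (deg G))^[m] S :=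
      Nat.find_min hP (by omega : m < N)
    rcases Finset.mem_union.mp hNm with h | h
    · exact absurd h hnot
    · have hcard : deg G u ≤ (nbr G u ∩ (actStep G (deg G))^[m] S).card :=
        (Finset.mem_filter.mp h).2
      have heq : nbr G u ∩ (actStep G (deg G))^[m] S = nbr G u :=
        Finset.eq_of_subset_of_card_le Finset.inter_subset_left hcard
      intro w hw
      have hw' : w ∈ nbr G u ∩ (actStep G (deg G))^[m] S := by rw [heq]; exact hw
      exact (Finset.mem_inter.mp hw').2
  · exact Nat.find_min hP (by omega : m < N)

/-- σ(S) is an independent set under unanimity thresholds. -/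
lemma indep (G : SimpleGraph V) (S : Finset V) {u v : V}
    (hu : u ∈ sigmaCl G (deg G) S) (hv : v ∈ sigmaCl G (deg G) S)
    (huS : u ∉ S) (hvS : v ∉ S) : ¬ G.Adj u v := by
  intro hadj
  obtain ⟨n, hn1, hn2⟩ := exists_round G S hu huS
  obtain ⟨m, hm1, hm2⟩ := exists_round G S hv hvS
  have hvn : v ∈ (actStep G (deg G))^[n] S :=
    hn1 (by simp [nbr, hadj])
  have hum : u ∈ (actStep G (deg G))^[m] S :=
    hm1 (by simp [nbr, hadj.symm])
  rcases le_total n m with h | h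
  · exact hm2 (iterate_mono G (deg G) S h hvn)
  · exact hn2 (iterate_mono G (deg G) S h hum)

lemma walk_len (G : SimpleGraph V) (S : Finset V)
    {x y : (↑(sigmaCl G (deg G) S) : Set V)}
    (p : (G.induce (↑(sigmaCl G (deg G) S) : Set V)).Walk x y) :
    p.length + (if (x : V) ∈ S then 1 else 0) ≤
      2 * (p.support.map Subtype.val).countP (fun a => decide (a ∈ S)) := by
  induction p with
  | nil =>
    simp only [SimpleGraph.Walk.length_nil, SimpleGraph.Walk.support_nil, List.map_cons,
      List.map_nil]
    split_ifs with h <;> simp [h]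
  | @cons a b c hab q ih =>
    by_cases h : (a : V) ∈ S
    · have hc : List.countP (fun v => decide (v ∈ S)) (List.map Subtype.val (a :: q.support))
          = List.countP (fun v => decide (v ∈ S)) (List.map Subtype.val q.support) + 1 := by
        simp [List.countP_cons, h]
      simp only [SimpleGraph.Walk.length_cons, SimpleGraph.Walk.support_cons, hc, if_pos h]
      split_ifs at ih <;> omega
    · have hbS : (b : V) ∈ S := by
        by_contra hb
        exact indep G S a.2 b.2 h hb ((SimpleGraph.comap_adj.mp hab))
      have hc : List.countP (fun v => decide (v ∈ S)) (List.map Subtype.val (a :: q.support))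
          = List.countP (fun v => decide (v ∈ S)) (List.map Subtype.val q.support) := by
        simp [List.countP_cons, h]
      simp only [SimpleGraph.Walk.length_cons, SimpleGraph.Walk.support_cons, hc, if_neg h]
      rw [if_pos hbS] at ih
      omega

/-- With unanimity thresholds and |S| ≤ k, if the subgraph of G induced by σ[S] is
connected, then any two of its vertices are at distance at most 2k within G[σ[S]]. -/
theorem stmt16 (G : SimpleGraph V) (k : ℕ) (hk : 1 ≤ k) (S : Finset V) (hS : S.card ≤ k)
    (hconn : (G.induce (↑(sigmaCl G (deg G) S) : Set V)).Connected) :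
    ∀ x y : (↑(sigmaCl G (deg G) S) : Set V),
      (G.induce (↑(sigmaCl G (deg G) S) : Set V)).edist x y ≤ ((2 * k : ℕ) : ℕ∞) := by
  intro x y
  obtain ⟨w⟩ := hconn.preconnected x y
  let p := w.toPath
  have hlen : (p : (G.induce (↑(sigmaCl G (deg G) S) : Set V)).Walk x y).length ≤ 2 * k := by
    have h1 := walk_len G S (p : (G.induce (↑(sigmaCl G (deg G) S) : Set V)).Walk x y)
    have hnodup : (p : (G.induce (↑(sigmaCl G (deg G) S) : Set V)).Walk x y).support.Nodup :=
      p.2.support_nodup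
    set l := (p : (G.induce (↑(sigmaCl G (deg G) S) : Set V)).Walk x y).support with hl
    have hcount : (l.map Subtype.val).countP (fun a => decide (a ∈ S)) ≤ S.card := by
      set L := (l.map Subtype.val).filter (fun a => decide (a ∈ S)) with hL
      have hfil : L.length = (l.map Subtype.val).countP (fun a => decide (a ∈ S)) :=
        List.countP_eq_length_filter.symm
      have hnd : L.Nodup := (hnodup.map Subtype.val_injective).filter _
      have hsub : L.toFinset ⊆ S := by
        intro v hvmem
        rw [List.mem_toFinset, hL] at hvmem
        have := List.of_mem_filter hvmem
        simpa using this
      have := Finset.card_le_card hsub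
      rw [List.toFinset_card_of_nodup hnd, hfil] at this
      exact this
    have := le_trans (Nat.le_add_right _ _) h1
    calc _ ≤ 2 * (l.map Subtype.val).countP (fun a => decide (a ∈ S)) := this
      _ ≤ 2 * S.card := by omega
      _ ≤ 2 * k := by omega
  calc (G.induce (↑(sigmaCl G (deg G) S) : Set V)).edist x y
      ≤ (p : (G.induce (↑(sigmaCl G (deg G) S) : Set V)).Walk x y).length :=
        SimpleGraph.Walk.edist_le _
    _ ≤ ((2 * k : ℕ) : ℕ∞) := by exact_mod_cast hlen
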